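/- Let R be a rational function with complex coefficients having no zeros and no poles on the real line and with a finite nonzero limit at infinity (deg numerator = deg denominator). Then the winding number of R restricted to ℝ (compactified) about the origin equals the number of zeros of R in the upper half-plane minus the number of poles of R in the upper half-plane (counted with multiplicity). -/

import Mathlib

open Polynomial

open Polynomial Complex Filter MeasureTheory Topology

namespace WindAux

lemma sub_ofReal_ne {a : ℂ} (ha : a.im ≠ 0) (x : ℝ) : (x : ℂ) - a ≠ 0 := by
  intro h
  apply ha
  have := congrArg Complex.im h
  simpa using this.symm

lemma tendsto_abs_top {a : ℂ} :
    Tendsto (fun x : ℝ => ‖(x : ℂ) - a‖) atTop atTop := by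
  apply tendsto_atTop_mono (f := fun x : ℝ => x - a.re)
  · intro x
    calc x - a.re ≤ |x - a.re| := le_abs_self _
    _ = |((x : ℂ) - a).re| := by simp
    _ ≤ ‖(x : ℂ) - a‖ := Complex.abs_re_le_norm _
  · exact tendsto_atTop_add_const_right _ _ tendsto_id

lemma tendsto_abs_bot {a : ℂ} :
    Tendsto (fun x : ℝ => ‖(x : ℂ) - a‖) atBot atTop := by
  apply tendsto_atTop_mono (f := fun x : ℝ => a.re - x)
  · intro x
    calc a.re - x ≤ |x - a.re| := by rw [abs_sub_comm]; exact le_abs_self _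
    _ = |((x : ℂ) - a).re| := by simp
    _ ≤ ‖(x : ℂ) - a‖ := Complex.abs_re_le_norm _
  · have : Tendsto (fun x : ℝ => a.re + -x) atBot atTop :=
      tendsto_atTop_add_const_left _ a.re tendsto_neg_atBot_atTop
    exact this.congr fun x => by ring

lemma tendsto_arg_top (a : ℂ) :
    Tendsto (fun x : ℝ => Complex.arg ((x : ℂ) - a)) atTop (𝓝 0) := by
  have h1 : Tendsto (fun x : ℝ => Real.arcsin (((x : ℂ) - a).im / ‖(x : ℂ) - a‖))
      atTop (𝓝 0) := by
    have h2 : Tendsto (fun x : ℝ => ((x : ℂ) - a).im / ‖(x : ℂ) - a‖) atTop (𝓝 0) := by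
      simp only [Complex.sub_im, Complex.ofReal_im, zero_sub]
      exact tendsto_const_nhds.div_atTop tendsto_abs_top
    have := (Real.continuous_arcsin.tendsto 0).comp h2
    simpa [Function.comp_def] using this
  apply h1.congr'
  filter_upwards [eventually_gt_atTop a.re] with x hx
  rw [Complex.arg_of_re_nonneg]
  simp only [Complex.sub_re, Complex.ofReal_re]
  linarith

end WindAux

namespace WindAux

lemma tendsto_arg_bot {a : ℂ} (ha : a.im ≠ 0) :
    Tendsto (fun x : ℝ => Complex.arg ((x : ℂ) - a)) atBot
      (𝓝 (if 0 < a.im then -Real.pi else Real.pi)) := by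
  have hratio : Tendsto (fun x : ℝ => a.im / ‖(x : ℂ) - a‖) atBot (𝓝 0) :=
    tendsto_const_nhds.div_atTop tendsto_abs_bot
  have harcsin : Tendsto (fun x : ℝ => Real.arcsin (a.im / ‖(x : ℂ) - a‖))
      atBot (𝓝 0) := by simpa [Function.comp_def] using (Real.continuous_arcsin.tendsto 0).comp hratio
  rcases lt_or_gt_of_ne ha with hneg | hpos
  · rw [if_neg (not_lt.2 hneg.le)]
    have h1 : Tendsto (fun x : ℝ =>
        Real.arcsin (a.im / ‖(x : ℂ) - a‖) + Real.pi) atBot (𝓝 Real.pi) := by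
      simpa using harcsin.add_const Real.pi
    apply h1.congr'
    filter_upwards [eventually_lt_atBot a.re] with x hx
    rw [Complex.arg_of_re_neg_of_im_nonneg]
    · simp
    · simp only [Complex.sub_re, Complex.ofReal_re]; linarith
    · simp only [Complex.sub_im, Complex.ofReal_im, zero_sub]; linarith
  · rw [if_pos hpos]
    have h1 : Tendsto (fun x : ℝ =>
        Real.arcsin (a.im / ‖(x : ℂ) - a‖) - Real.pi) atBot (𝓝 (-Real.pi)) := by
      simpa using harcsin.sub_const Real.pi
    apply h1.congr'
    filter_upwards [eventually_lt_atBot a.re] with x hx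
    rw [Complex.arg_of_re_neg_of_im_neg]
    · simp
    · simp only [Complex.sub_re, Complex.ofReal_re]; linarith
    · simp only [Complex.sub_im, Complex.ofReal_im, zero_sub]; linarith

end WindAux

namespace WindAux

lemma tendsto_logabs_sub {a b : ℂ} (ha : a.im ≠ 0) (hb : b.im ≠ 0) (l : Filter ℝ)
    (hB : Tendsto (fun x : ℝ => ‖(x : ℂ) - b‖) l atTop) :
    Tendsto (fun x : ℝ =>
      Real.log (‖(x : ℂ) - a‖) - Real.log (‖(x : ℂ) - b‖)) l (𝓝 0) := by
  have h0 : Tendsto (fun x : ℝ => (b - a) / ((x : ℂ) - b)) l (𝓝 0) := by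
    rw [tendsto_zero_iff_norm_tendsto_zero]
    have := (tendsto_const_nhds (α := ℝ) (x := ‖b - a‖)).div_atTop hB
    apply this.congr
    intro x
    rw [norm_div]
  have hr : Tendsto (fun x : ℝ => ((x : ℂ) - a) / ((x : ℂ) - b)) l (𝓝 1) := by
    have h1 : Tendsto (fun x : ℝ => 1 + (b - a) / ((x : ℂ) - b)) l (𝓝 (1 + 0)) :=
      tendsto_const_nhds.add h0
    rw [add_zero] at h1
    apply h1.congr
    intro x
    field_simp [sub_ofReal_ne hb]
    ring
  have habs1 : Tendsto (fun x : ℝ =>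
      ‖(x : ℂ) - a‖ / ‖(x : ℂ) - b‖) l (𝓝 1) := by
    have := (continuous_norm.tendsto 1).comp hr
    simp only [Function.comp_def, norm_div, norm_one] at this
    exact this
  have hlog : Tendsto (fun x : ℝ =>
      Real.log (‖(x : ℂ) - a‖ / ‖(x : ℂ) - b‖)) l (𝓝 0) := by
    have := ((Real.continuousAt_log one_ne_zero).tendsto).comp habs1
    simp only [Function.comp_def, Real.log_one] at this
    exact this
  apply hlog.congr
  intro x
  rw [Real.log_div]
  · exact norm_ne_zero_iff.mpr (sub_ofReal_ne ha x)
  · exact norm_ne_zero_iff.mpr (sub_ofReal_ne hb x)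

lemma L_decomp {a b : ℂ} (x : ℝ) :
    Complex.log ((x : ℂ) - a) - Complex.log ((x : ℂ) - b) =
      ((Real.log (‖(x : ℂ) - a‖) - Real.log (‖(x : ℂ) - b‖) : ℝ) : ℂ) +
        ((Complex.arg ((x : ℂ) - a) - Complex.arg ((x : ℂ) - b) : ℝ) : ℂ) * Complex.I := by
  simp only [Complex.log]
  push_cast
  ring

lemma tendsto_L_top {a : ℂ} (ha : a.im ≠ 0) :
    Tendsto (fun x : ℝ => Complex.log ((x : ℂ) - a) - Complex.log ((x : ℂ) - Complex.I))
      atTop (𝓝 0) := by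
  have hI : (Complex.I).im ≠ 0 := by simp
  have h1 := tendsto_logabs_sub ha hI atTop tendsto_abs_top
  have h2 := (tendsto_arg_top a).sub (tendsto_arg_top Complex.I)
  have h3 := ((Complex.continuous_ofReal.tendsto _).comp h1).add
    (((Complex.continuous_ofReal.tendsto _).comp h2).mul_const Complex.I)
  simp only [Function.comp_def] at h3
  have h4 := h3.congr (fun x => (L_decomp x).symm)
  simpa using h4

lemma tendsto_L_bot {a : ℂ} (ha : a.im ≠ 0) :
    Tendsto (fun x : ℝ => Complex.log ((x : ℂ) - a) - Complex.log ((x : ℂ) - Complex.I))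
      atBot (𝓝 (if 0 < a.im then 0 else 2 * Real.pi * Complex.I)) := by
  have hI : (Complex.I).im ≠ 0 := by simp
  have h1 := tendsto_logabs_sub ha hI atBot tendsto_abs_bot
  have h2 := (tendsto_arg_bot ha).sub (tendsto_arg_bot hI)
  have h3 := ((Complex.continuous_ofReal.tendsto _).comp h1).add
    (((Complex.continuous_ofReal.tendsto _).comp h2).mul_const Complex.I)
  simp only [Function.comp_def] at h3
  have h4 := h3.congr (fun x => (L_decomp x).symm)
  have hIpos : (0 : ℝ) < (Complex.I).im := by simp
  rw [if_pos hIpos] at h4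
  by_cases hpos : 0 < a.im
  · rw [if_pos hpos] at h4
    rw [if_pos hpos]
    simpa using h4
  · rw [if_neg hpos] at h4
    rw [if_neg hpos]
    have : ((Real.pi - -Real.pi : ℝ) : ℂ) * Complex.I = 2 * Real.pi * Complex.I := by
      push_cast; ring
    rw [← this]
    simpa using h4

end WindAux

namespace WindAux

lemma hasDerivAt_sub_const {a : ℂ} (x : ℝ) :
    HasDerivAt (fun t : ℝ => (t : ℂ) - a) 1 x := by
  simpa using (Complex.ofRealCLM.hasDerivAt (x := x)).sub_const a

lemma mem_slit {a : ℂ} (ha : a.im ≠ 0) (x : ℝ) : (x : ℂ) - a ∈ Complex.slitPlane := by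
  rw [Complex.mem_slitPlane_iff]
  right
  simp only [Complex.sub_im, Complex.ofReal_im, zero_sub, ne_eq, neg_eq_zero]
  exact ha

lemma hasDerivAt_L {a : ℂ} (ha : a.im ≠ 0) (x : ℝ) :
    HasDerivAt (fun t : ℝ => Complex.log ((t : ℂ) - a) - Complex.log ((t : ℂ) - Complex.I))
      (((x : ℂ) - a)⁻¹ - ((x : ℂ) - Complex.I)⁻¹) x := by
  have hI : (Complex.I).im ≠ 0 := by simp
  have hA := (hasDerivAt_sub_const (a := a) x).clog_real (mem_slit ha x)
  have hB := (hasDerivAt_sub_const (a := Complex.I) x).clog_real (mem_slit hI x)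
  have := hA.sub hB
  simpa [one_div, Pi.sub_def] using this

lemma sq_abs_sub_I (x : ℝ) : ‖(x : ℂ) - Complex.I‖ ^ 2 = 1 + x ^ 2 := by
  rw [Complex.sq_norm, Complex.normSq_apply]
  simp
  ring

lemma key_bound {a : ℂ} (ha : a.im ≠ 0) (x : ℝ) :
    1 + x ^ 2 ≤ (2 + (1 + 2 * a.re ^ 2) / a.im ^ 2) * ‖(x : ℂ) - a‖ ^ 2 := by
  have him2 : (0:ℝ) < a.im ^ 2 := by positivity
  have habs : ‖(x : ℂ) - a‖ ^ 2 = (x - a.re) ^ 2 + a.im ^ 2 := by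
    rw [Complex.sq_norm, Complex.normSq_apply]
    simp
    ring
  rw [habs]
  have hk : (1 + 2 * a.re ^ 2) / a.im ^ 2 * a.im ^ 2 = 1 + 2 * a.re ^ 2 :=
    div_mul_cancel₀ _ (ne_of_gt him2)
  have hknn : 0 ≤ (1 + 2 * a.re ^ 2) / a.im ^ 2 := by positivity
  nlinarith [sq_nonneg (x - 2 * a.re), sq_nonneg (x - a.re), hknn, hk]

lemma continuous_g {a : ℂ} (ha : a.im ≠ 0) :
    Continuous (fun x : ℝ => ((x : ℂ) - a)⁻¹ - ((x : ℂ) - Complex.I)⁻¹) := by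
  have hI : (Complex.I).im ≠ 0 := by simp
  exact ((Complex.continuous_ofReal.sub continuous_const).inv₀ (sub_ofReal_ne ha)).sub
    ((Complex.continuous_ofReal.sub continuous_const).inv₀ (sub_ofReal_ne hI))

lemma integrable_g {a : ℂ} (ha : a.im ≠ 0) :
    Integrable (fun x : ℝ => ((x : ℂ) - a)⁻¹ - ((x : ℂ) - Complex.I)⁻¹) := by
  have hI : (Complex.I).im ≠ 0 := by simp
  set K : ℝ := 2 + (1 + 2 * a.re ^ 2) / a.im ^ 2 with hK
  have hKpos : 0 < K := by positivity
  set C : ℝ := ‖a - Complex.I‖ * Real.sqrt K with hC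
  apply Integrable.mono' ((integrable_inv_one_add_sq).const_mul C)
    (continuous_g ha).aestronglyMeasurable
  filter_upwards with x
  have hgx : ((x : ℂ) - a)⁻¹ - ((x : ℂ) - Complex.I)⁻¹ =
      (a - Complex.I) / (((x : ℂ) - a) * ((x : ℂ) - Complex.I)) := by
    field_simp [sub_ofReal_ne ha x, sub_ofReal_ne hI x]
    ring
  rw [hgx]
  have h1x : (0:ℝ) < 1 + x ^ 2 := by positivity
  set p := ‖(x : ℂ) - a‖ with hp
  set q := ‖(x : ℂ) - Complex.I‖ with hq
  have hppos : 0 < p := by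
    rw [hp]; exact norm_pos_iff.mpr (sub_ofReal_ne ha x)
  have hqpos : 0 < q := by
    rw [hq]; exact norm_pos_iff.mpr (sub_ofReal_ne hI x)
  have hnorm : ‖(a - Complex.I) / (((x : ℂ) - a) * ((x : ℂ) - Complex.I))‖ =
      ‖a - Complex.I‖ / (p * q) := by
    rw [hp, hq]
    simp [map_div₀, map_mul]
  rw [hnorm]
  -- key: 1 + x^2 ≤ Real.sqrt K * (p * q)
  have hq2 : q ^ 2 = 1 + x ^ 2 := sq_abs_sub_I x
  have hsq : Real.sqrt (1 + x ^ 2) ≤ Real.sqrt K * p := by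
    have h1 : Real.sqrt (1 + x ^ 2) ≤ Real.sqrt (K * p ^ 2) :=
      Real.sqrt_le_sqrt (key_bound ha x)
    rwa [Real.sqrt_mul hKpos.le, Real.sqrt_sq hppos.le] at h1
  have hqeq : q = Real.sqrt (1 + x ^ 2) := by
    rw [← hq2, Real.sqrt_sq hqpos.le]
  have hkey : 1 + x ^ 2 ≤ Real.sqrt K * (p * q) := by
    calc 1 + x ^ 2 = Real.sqrt (1 + x ^ 2) * Real.sqrt (1 + x ^ 2) :=
          (Real.mul_self_sqrt h1x.le).symm
    _ ≤ (Real.sqrt K * p) * Real.sqrt (1 + x ^ 2) := by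
        apply mul_le_mul_of_nonneg_right hsq (Real.sqrt_nonneg _)
    _ = Real.sqrt K * (p * q) := by rw [hqeq]; ring
  have habsnn : 0 ≤ ‖a - Complex.I‖ := norm_nonneg _
  rw [hC, div_le_iff₀ (by positivity : (0:ℝ) < p * q)]
  calc ‖a - Complex.I‖
      = ‖a - Complex.I‖ * ((1 + x ^ 2) * (1 + x ^ 2)⁻¹) := by
        rw [mul_inv_cancel₀ h1x.ne']; ring
    _ ≤ ‖a - Complex.I‖ * ((Real.sqrt K * (p * q)) * (1 + x ^ 2)⁻¹) := by
        apply mul_le_mul_of_nonneg_left _ habsnn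
        apply mul_le_mul_of_nonneg_right hkey (by positivity)
    _ = ‖a - Complex.I‖ * Real.sqrt K * (1 + x ^ 2)⁻¹ * (p * q) := by ring

end WindAux

namespace WindAux

lemma integral_g {a : ℂ} (ha : a.im ≠ 0) :
    ∫ x : ℝ, (((x : ℂ) - a)⁻¹ - ((x : ℂ) - Complex.I)⁻¹) =
      if 0 < a.im then 0 else -(2 * Real.pi * Complex.I) := by
  have h := integral_of_hasDerivAt_of_tendsto (hasDerivAt_L ha) (integrable_g ha)
    (tendsto_L_bot ha) (tendsto_L_top ha)
  rw [h]
  by_cases hpos : 0 < a.im <;> simp [hpos]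

lemma integrable_msum (s : Multiset ℂ) (g : ℂ → ℝ → ℂ) (h : ∀ a ∈ s, Integrable (g a)) :
    Integrable (fun x => (s.map (fun a => g a x)).sum) := by
  induction s using Multiset.induction with
  | empty => simpa using integrable_const (0 : ℂ)
  | cons a s ih =>
    simp only [Multiset.map_cons, Multiset.sum_cons]
    exact (h a (Multiset.mem_cons_self a s)).add
      (ih fun b hb => h b (Multiset.mem_cons_of_mem hb))

lemma integral_msum (s : Multiset ℂ) (g : ℂ → ℝ → ℂ) (h : ∀ a ∈ s, Integrable (g a)) :
    ∫ x : ℝ, (s.map (fun a => g a x)).sum = (s.map (fun a => ∫ x : ℝ, g a x)).sum := by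
  induction s using Multiset.induction with
  | empty => simp
  | cons a s ih =>
    simp only [Multiset.map_cons, Multiset.sum_cons]
    rw [integral_add (h a (Multiset.mem_cons_self a s))
      (integrable_msum s g fun b hb => h b (Multiset.mem_cons_of_mem hb))]
    rw [ih fun b hb => h b (Multiset.mem_cons_of_mem hb)]

lemma multiset_logderiv (s : Multiset ℂ) (x : ℂ) (hx : ∀ a ∈ s, x - a ≠ 0) :
    (Polynomial.derivative (s.map (fun a => X - C a)).prod).eval x /
      ((s.map (fun a => X - C a)).prod).eval x = (s.map (fun a => (x - a)⁻¹)).sum := by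
  induction s using Multiset.induction with
  | empty => simp
  | cons a s ih =>
    have hu : x - a ≠ 0 := hx a (Multiset.mem_cons_self a s)
    have hG : ((s.map (fun a => X - C a)).prod).eval x ≠ 0 := by
      rw [eval_multiset_prod]
      apply Multiset.prod_ne_zero
      intro h0
      rw [Multiset.mem_map] at h0
      obtain ⟨q, hq, hq0⟩ := h0
      rw [Multiset.mem_map] at hq
      obtain ⟨b, hb, rfl⟩ := hq
      simp only [eval_sub, eval_X, eval_C] at hq0
      exact hx b (Multiset.mem_cons_of_mem hb) hq0
    simp only [Multiset.map_cons, Multiset.prod_cons, Multiset.sum_cons, derivative_mul,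
      eval_add, eval_mul, derivative_sub, derivative_X, derivative_C, sub_zero, eval_one,
      eval_sub, eval_X, eval_C, one_mul]
    rw [← ih fun b hb => hx b (Multiset.mem_cons_of_mem hb)]
    field_simp

lemma poly_logderiv (p : ℂ[X]) (hp : p ≠ 0) (x : ℂ) (hx : ∀ a ∈ p.roots, x - a ≠ 0) :
    (Polynomial.derivative p).eval x / p.eval x =
      (p.roots.map (fun a => (x - a)⁻¹)).sum := by
  have hsplit : p = C p.leadingCoeff * (p.roots.map (fun a => X - C a)).prod :=
    (IsAlgClosed.splits p).eq_prod_roots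
  have hlc : p.leadingCoeff ≠ 0 := leadingCoeff_ne_zero.2 hp
  have key : (Polynomial.derivative (C p.leadingCoeff *
        (p.roots.map (fun a => X - C a)).prod)).eval x /
      ((C p.leadingCoeff * (p.roots.map (fun a => X - C a)).prod)).eval x =
      (p.roots.map (fun a => (x - a)⁻¹)).sum := by
    rw [derivative_C_mul, eval_mul, eval_mul, eval_C, mul_div_mul_left _ _ hlc]
    exact multiset_logderiv _ x hx
  rw [← hsplit] at key
  exact key

lemma roots_im_ne {p : ℂ[X]} (hreal : ∀ x : ℝ, p.eval (x : ℂ) ≠ 0) :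
    ∀ a ∈ p.roots, a.im ≠ 0 := by
  intro a ha him
  have hroot : p.eval a = 0 := isRoot_of_mem_roots ha
  have : a = ((a.re : ℝ) : ℂ) := by
    apply Complex.ext <;> simp [him]
  rw [this] at hroot
  exact hreal a.re hroot

end WindAux

namespace WindAux

lemma sum_shift (s : Multiset ℂ) (x : ℝ) :
    (s.map fun a => ((x : ℂ) - a)⁻¹).sum =
      (s.map fun a => (((x : ℂ) - a)⁻¹ - ((x : ℂ) - Complex.I)⁻¹)).sum +
        (Multiset.card s : ℂ) * ((x : ℂ) - Complex.I)⁻¹ := by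
  induction s using Multiset.induction with
  | empty => simp
  | cons a s ih =>
    simp only [Multiset.map_cons, Multiset.sum_cons, Multiset.card_cons, ih]
    push_cast
    ring

lemma sum_if (s : Multiset ℂ) (c : ℂ) :
    (s.map fun a => if 0 < a.im then (0 : ℂ) else c).sum =
      ((Multiset.card s : ℂ) - ((s.filter fun a => 0 < a.im).card : ℂ)) * c := by
  induction s using Multiset.induction with
  | empty => simp
  | cons a s ih =>
    by_cases h : 0 < a.im
    · simp only [Multiset.map_cons, Multiset.sum_cons, if_pos h, Multiset.filter_cons,
        Multiset.card_cons, ih, h, if_true]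
      push_cast [Multiset.card_cons, Multiset.card_add, Multiset.card_singleton]
      ring
    · simp only [Multiset.map_cons, Multiset.sum_cons, if_neg h, Multiset.filter_cons,
        Multiset.card_cons, ih, h, if_false]
      push_cast [Multiset.card_cons, zero_add]
      ring

end WindAux


open WindAux in
/-- **Argument principle for rational functions on the real line.**  Let `R = P/Q` be a
rational function with complex coefficients, with no zeros and no poles on ℝ and with
`deg P = deg Q` (so that `R` has a finite nonzero limit at `∞` and its restriction to the
compactified real line is a closed curve avoiding `0`).  Then the winding number of this
curve about the origin, computed as `(2πi)⁻¹ ∫_ℝ R'(x)/R(x) dx`, equals the number of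
zeros of `R` in the upper half-plane minus the number of poles of `R` in the upper
half-plane, counted with multiplicity. -/
theorem winding_number_rational (P Q : Polynomial ℂ) (hP : P ≠ 0) (hQ : Q ≠ 0)
    (hdeg : P.natDegree = Q.natDegree)
    (hPreal : ∀ x : ℝ, P.eval (x : ℂ) ≠ 0) (hQreal : ∀ x : ℝ, Q.eval (x : ℂ) ≠ 0) :
    (2 * Real.pi * Complex.I)⁻¹ *
        ∫ x : ℝ, deriv (fun t : ℝ => P.eval (t : ℂ) / Q.eval (t : ℂ)) x /
          (P.eval (x : ℂ) / Q.eval (x : ℂ)) =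
      ((P.roots.filter fun z => 0 < z.im).card : ℂ) -
        ((Q.roots.filter fun z => 0 < z.im).card : ℂ) := by
  have hrP : ∀ a ∈ P.roots, a.im ≠ 0 := roots_im_ne hPreal
  have hrQ : ∀ a ∈ Q.roots, a.im ≠ 0 := roots_im_ne hQreal
  have hcards : Multiset.card P.roots = Multiset.card Q.roots := by
    rw [splits_iff_card_roots.mp (IsAlgClosed.splits P),
      splits_iff_card_roots.mp (IsAlgClosed.splits Q), hdeg]
  set g : ℂ → ℝ → ℂ := fun a x => ((x : ℂ) - a)⁻¹ - ((x : ℂ) - Complex.I)⁻¹ with hg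
  have key : ∀ x : ℝ, deriv (fun t : ℝ => P.eval (t : ℂ) / Q.eval (t : ℂ)) x /
      (P.eval (x : ℂ) / Q.eval (x : ℂ)) =
      (P.roots.map fun a => g a x).sum - (Q.roots.map fun a => g a x).sum := by
    intro x
    have hPx := hPreal x
    have hQx := hQreal x
    have hdP : HasDerivAt (fun t : ℝ => P.eval (t : ℂ)) (P.derivative.eval (x : ℂ)) x :=
      (P.hasDerivAt ((x : ℝ) : ℂ)).comp_ofReal
    have hdQ : HasDerivAt (fun t : ℝ => Q.eval (t : ℂ)) (Q.derivative.eval (x : ℂ)) x :=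
      (Q.hasDerivAt ((x : ℝ) : ℂ)).comp_ofReal
    have hdiv := hdP.div hdQ hQx
    rw [show deriv (fun t : ℝ => P.eval (t : ℂ) / Q.eval (t : ℂ)) x = _ from hdiv.deriv]
    have e1 : (P.derivative.eval (x : ℂ) * Q.eval (x : ℂ) -
          P.eval (x : ℂ) * Q.derivative.eval (x : ℂ)) / Q.eval (x : ℂ) ^ 2 /
        (P.eval (x : ℂ) / Q.eval (x : ℂ)) =
        P.derivative.eval (x : ℂ) / P.eval (x : ℂ) -
          Q.derivative.eval (x : ℂ) / Q.eval (x : ℂ) := by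
      field_simp
    rw [e1, poly_logderiv P hP _ (fun a ha => sub_ofReal_ne (hrP a ha) x),
      poly_logderiv Q hQ _ (fun a ha => sub_ofReal_ne (hrQ a ha) x),
      sum_shift P.roots x, sum_shift Q.roots x, hcards]
    ring
  rw [integral_congr_ae (Filter.Eventually.of_forall key)]
  have hintP : ∀ a ∈ P.roots, Integrable (g a) := fun a ha => integrable_g (hrP a ha)
  have hintQ : ∀ a ∈ Q.roots, Integrable (g a) := fun a ha => integrable_g (hrQ a ha)
  rw [integral_sub (integrable_msum _ g hintP) (integrable_msum _ g hintQ),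
    integral_msum _ g hintP, integral_msum _ g hintQ]
  rw [Multiset.map_congr rfl (fun a ha => integral_g (hrP a ha)),
    Multiset.map_congr rfl (fun a ha => integral_g (hrQ a ha)),
    sum_if P.roots _, sum_if Q.roots _]
  have hn : ((Multiset.card P.roots : ℕ) : ℂ) = ((Multiset.card Q.roots : ℕ) : ℂ) := by
    exact_mod_cast congrArg Nat.cast hcards
  rw [hn]
  have hpi : (Real.pi : ℂ) ≠ 0 := Complex.ofReal_ne_zero.mpr Real.pi_ne_zero
  field_simp
  ring
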